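/- arXiv:0912.2885 — 3 statements merged into one kernel-verified Lean document; each statement's English description precedes it below -/
import Mathlib

section
/- Fix y₀ > 0, 0 < x₀ < y₀/2, and c with 1 ≤ c < 2, and set k = c(1 - c/2)·y₀² > 0. Let x(t) = x₀ e^{-Y(t)} / (1 - x₀ ∫₀ᵗ e^{-Y(u)} du) with Y(t) = -εt²/2 + y₀t be the solution of x' = -(y₀ - εt)x + x². Then as ε → 0⁺, x(c·y₀/ε) is bounded above by x₀ e^{-k/ε} / (1 - 2x₀/y₀) (up to a multiplicative constant); in particular x(c·y₀/ε) ≤ 2x₀ for all sufficiently small ε > 0. -/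
open Real intervalIntegral in
private lemma integral_exp_mul_aux (a t : ℝ) (ha : a ≠ 0) :
    ∫ u in (0:ℝ)..t, Real.exp (a * u) = (Real.exp (a * t) - 1) / a := by
  rw [intervalIntegral.integral_comp_mul_left (fun x => Real.exp x) ha]
  simp [integral_exp, smul_eq_mul, div_eq_inv_mul]

/-- exp(-w) ≤ 1/w for w > 0 -/
private lemma exp_neg_le_inv (w : ℝ) (hw : 0 < w) : Real.exp (-w) ≤ 1 / w := by
  rw [Real.exp_neg, inv_eq_one_div]
  apply one_div_le_one_div_of_le hw
  linarith [Real.add_one_le_exp w]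

set_option maxHeartbeats 2000000 in
/-- Delay to the dynamical transcritical bifurcation: for `y₀ > 0`, `0 < x₀ < y₀/2`,
`1 ≤ c < 2` and `k = c(1 - c/2)y₀² > 0`, the solution
`x_ε(t) = x₀ e^{-Y(t)} / (1 - x₀ ∫₀ᵗ e^{-Y(u)} du)`, `Y(t) = -εt²/2 + y₀ t`, of
`x' = -(y₀ - εt)x + x²` satisfies, as `ε → 0⁺`,
`x_ε(c y₀/ε) ≤ M · x₀ e^{-k/ε}/(1 - 2x₀/y₀)` for some constant `M`; in particular
`x_ε(c y₀/ε) ≤ 2 x₀` for all sufficiently small `ε > 0`. -/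
theorem delay_to_transcritical_bifurcation (y₀ x₀ c : ℝ) (hy₀ : 0 < y₀)
    (hx₀ : 0 < x₀) (hx₀' : x₀ < y₀ / 2) (hc1 : 1 ≤ c) (hc2 : c < 2) :
    let k : ℝ := c * (1 - c / 2) * y₀ ^ 2
    let Y : ℝ → ℝ → ℝ := fun ε t => -ε * t ^ 2 / 2 + y₀ * t
    let x : ℝ → ℝ → ℝ := fun ε t =>
      x₀ * Real.exp (-Y ε t) / (1 - x₀ * ∫ u in (0 : ℝ)..t, Real.exp (-Y ε u))
    0 < k ∧
    ∃ M > 0, ∃ ε₀ > 0, ∀ ε : ℝ, 0 < ε → ε < ε₀ →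
      x ε (c * y₀ / ε) ≤ M * (x₀ * Real.exp (-k / ε) / (1 - 2 * x₀ / y₀)) ∧
      x ε (c * y₀ / ε) ≤ 2 * x₀ := by
  intro k Y x
  have hc0 : 0 < c := lt_of_lt_of_le one_pos hc1
  have hk : 0 < k := by
    have h1 : 0 < 1 - c / 2 := by linarith
    have h2 : 0 < y₀ ^ 2 := by positivity
    show 0 < c * (1 - c / 2) * y₀ ^ 2
    positivity
  set d : ℝ := 1 - 2 * x₀ / y₀ with hd_def
  have hd : 0 < d := by
    rw [hd_def, sub_pos, div_lt_one hy₀]; linarith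
  clear_value d
  refine ⟨hk, 2, two_pos, min (d * k ^ 2 / (8 * c * x₀ * y₀)) (d * k), ?_, ?_⟩
  · positivity
  intro ε hε hε'
  have hεa : ε < d * k ^ 2 / (8 * c * x₀ * y₀) := lt_of_lt_of_le hε' (min_le_left _ _)
  have hεb : ε < d * k := lt_of_lt_of_le hε' (min_le_right _ _)
  set t : ℝ := c * y₀ / ε with ht_def
  have ht : 0 < t := by positivity
  have hεt : ε * t = c * y₀ := by rw [ht_def]; field_simp
  -- Y at t equals k/ε
  have hYt : Y ε t = k / ε := by
    show -ε * t ^ 2 / 2 + y₀ * t = c * (1 - c / 2) * y₀ ^ 2 / ε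
    rw [ht_def]
    field_simp
    ring
  -- pointwise bound on the integrand
  have hpt : ∀ u ∈ Set.Icc (0:ℝ) t,
      Real.exp (-Y ε u) ≤ Real.exp (-(y₀ / 2) * u) + Real.exp (-k / ε) := by
    intro u hu
    obtain ⟨hu0, hut⟩ := hu
    rcases le_or_gt (ε * u) y₀ with h | h
    · have hY : -(Y ε u) ≤ -(y₀ / 2) * u := by
        show -(-ε * u ^ 2 / 2 + y₀ * u) ≤ -(y₀ / 2) * u
        nlinarith [mul_nonneg hu0 (sub_nonneg.2 h)]
      have h1 := Real.exp_le_exp.2 hY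
      have hpos : 0 < Real.exp (-k / ε) := Real.exp_pos _
      calc Real.exp (-Y ε u) ≤ Real.exp (-(y₀ / 2) * u) := h1
        _ ≤ _ := by linarith
    · -- here ε * u ∈ (y₀, c * y₀], show Y ε u ≥ k / ε
      have hv2 : ε * u ≤ c * y₀ := by
        calc ε * u ≤ ε * t := by nlinarith
          _ = c * y₀ := hεt
      have hv1 : (2 - c) * y₀ ≤ ε * u := by nlinarith
      have hYk : k / ε ≤ Y ε u := by
        show c * (1 - c / 2) * y₀ ^ 2 / ε ≤ -ε * u ^ 2 / 2 + y₀ * u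
        rw [div_le_iff₀ hε]
        nlinarith [mul_nonneg (sub_nonneg.2 hv2) (sub_nonneg.2 hv1)]
      have hY : -Y ε u ≤ -k / ε := by
        rw [neg_div]; linarith
      have h1 := Real.exp_le_exp.2 hY
      have hpos : 0 < Real.exp (-(y₀ / 2) * u) := Real.exp_pos _
      calc Real.exp (-Y ε u) ≤ Real.exp (-k / ε) := h1
        _ ≤ _ := by linarith
  -- integrability
  have hYcont : Continuous fun u : ℝ => -Y ε u := by
    show Continuous fun u : ℝ => -(-ε * u ^ 2 / 2 + y₀ * u)
    fun_prop
  have hint1 : IntervalIntegrable (fun u => Real.exp (-Y ε u)) MeasureTheory.volume 0 t :=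
    (Real.continuous_exp.comp hYcont).intervalIntegrable 0 t
  have hint2 : IntervalIntegrable (fun u => Real.exp (-(y₀ / 2) * u) + Real.exp (-k / ε))
      MeasureTheory.volume 0 t := by
    apply Continuous.intervalIntegrable; fun_prop
  set I : ℝ := ∫ u in (0:ℝ)..t, Real.exp (-Y ε u) with hI_def
  -- integral bound
  have hI : I ≤ 2 / y₀ + t * Real.exp (-k / ε) := by
    have h1 := intervalIntegral.integral_mono_on ht.le hint1 hint2 hpt
    have h2 : (∫ u in (0:ℝ)..t, (Real.exp (-(y₀ / 2) * u) + Real.exp (-k / ε)))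
        = (Real.exp (-(y₀ / 2) * t) - 1) / (-(y₀ / 2)) + t * Real.exp (-k / ε) := by
      rw [intervalIntegral.integral_add (by apply Continuous.intervalIntegrable; fun_prop)
        (by apply Continuous.intervalIntegrable; fun_prop)]
      rw [integral_exp_mul_aux _ _ (by simp; positivity : -(y₀/2) ≠ 0)]
      simp
    have he1 : 0 < Real.exp (-(y₀ / 2) * t) := Real.exp_pos _
    have h3 : (Real.exp (-(y₀ / 2) * t) - 1) / (-(y₀ / 2)) ≤ 2 / y₀ := by
      have heq : (Real.exp (-(y₀ / 2) * t) - 1) / (-(y₀ / 2))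
          = (1 - Real.exp (-(y₀ / 2) * t)) * (2 / y₀) := by
        rw [div_eq_iff (by simp; positivity : -(y₀/2) ≠ 0)]
        field_simp
        ring
      rw [heq]
      nlinarith [mul_pos he1 (by positivity : (0:ℝ) < 2 / y₀)]
    calc I ≤ _ := h1
      _ = _ := h2
      _ ≤ 2 / y₀ + t * Real.exp (-k / ε) := by linarith
  -- bound for t * exp(-k/ε)
  have hek : Real.exp (-k / ε) ≤ 4 * ε ^ 2 / k ^ 2 := by
    have hsq : Real.exp (-k / ε) = Real.exp (-(k / (2 * ε))) * Real.exp (-(k / (2 * ε))) := by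
      rw [← Real.exp_add]
      congr 1
      field_simp
      ring
    have h1 := exp_neg_le_inv (k / (2 * ε)) (by positivity)
    have h2 : (1 : ℝ) / (k / (2 * ε)) = 2 * ε / k := by
      field_simp
    rw [h2] at h1
    rw [hsq]
    have he0 : 0 ≤ Real.exp (-(k / (2 * ε))) := (Real.exp_pos _).le
    calc Real.exp (-(k / (2 * ε))) * Real.exp (-(k / (2 * ε)))
        ≤ (2 * ε / k) * (2 * ε / k) := by
          apply mul_le_mul h1 h1 he0 (by positivity)
      _ = 4 * ε ^ 2 / k ^ 2 := by field_simp; ring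
  have htek : x₀ * (t * Real.exp (-k / ε)) ≤ d / 2 := by
    have h1 : t * Real.exp (-k / ε) ≤ t * (4 * ε ^ 2 / k ^ 2) :=
      mul_le_mul_of_nonneg_left hek ht.le
    have h2 : t * (4 * ε ^ 2 / k ^ 2) = 4 * c * y₀ * ε / k ^ 2 := by
      rw [ht_def, div_mul_div_comm, div_eq_div_iff (by positivity) (by positivity)]
      ring
    have h4 : ε * (8 * c * x₀ * y₀) < d * k ^ 2 :=
      (lt_div_iff₀ (by positivity : (0:ℝ) < 8 * c * x₀ * y₀)).1 hεa
    have h3 : x₀ * (4 * c * y₀ * ε / k ^ 2) ≤ d / 2 := by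
      have heq : x₀ * (4 * c * y₀ * ε / k ^ 2) = (x₀ * (4 * c * y₀ * ε)) / k ^ 2 := by ring
      rw [heq, div_le_iff₀ (by positivity : (0:ℝ) < k ^ 2)]
      nlinarith [h4]
    calc x₀ * (t * Real.exp (-k / ε)) ≤ x₀ * (t * (4 * ε ^ 2 / k ^ 2)) :=
          mul_le_mul_of_nonneg_left h1 hx₀.le
      _ = x₀ * (4 * c * y₀ * ε / k ^ 2) := by rw [h2]
      _ ≤ d / 2 := h3
  -- denominator bound
  have hD : d / 2 ≤ 1 - x₀ * I := by
    have h1 : x₀ * I ≤ x₀ * (2 / y₀ + t * Real.exp (-k / ε)) :=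
      mul_le_mul_of_nonneg_left hI hx₀.le
    have h2 : x₀ * (2 / y₀ + t * Real.exp (-k / ε))
        = 2 * x₀ / y₀ + x₀ * (t * Real.exp (-k / ε)) := by ring
    linarith [hd_def.ge, hd_def.le, htek]
  have hDpos : 0 < 1 - x₀ * I := by linarith
  -- value of x at t
  have hxval : x ε t = x₀ * Real.exp (-k / ε) / (1 - x₀ * I) := by
    show x₀ * Real.exp (-Y ε t) / (1 - x₀ * I) = _
    rw [hYt, neg_div]
  have hbound1 : x ε t ≤ 2 * (x₀ * Real.exp (-k / ε) / d) := by
    rw [hxval]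
    have hnum : 0 ≤ x₀ * Real.exp (-k / ε) := by positivity
    calc x₀ * Real.exp (-k / ε) / (1 - x₀ * I)
        ≤ x₀ * Real.exp (-k / ε) / (d / 2) :=
          div_le_div_of_nonneg_left hnum (by positivity) hD
      _ = 2 * (x₀ * Real.exp (-k / ε) / d) := by
          field_simp
  refine ⟨hbound1, ?_⟩
  have hed : Real.exp (-k / ε) ≤ d := by
    have h1 := exp_neg_le_inv (k / ε) (by positivity)
    have h2 : (1 : ℝ) / (k / ε) = ε / k := one_div_div _ _
    have h3 : ε / k < d := by
      rw [div_lt_iff₀ hk]; nlinarith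
    have h4 : -k / ε = -(k / ε) := by ring
    rw [h4]
    linarith [h1, h2 ▸ h1]
  calc x ε t ≤ 2 * (x₀ * Real.exp (-k / ε) / d) := hbound1
    _ ≤ 2 * x₀ := by
      have : x₀ * Real.exp (-k / ε) / d ≤ x₀ := by
        rw [div_le_iff₀ hd]
        nlinarith
      linarith
end

section
/- Let b > 1, ε > 0, δ > 0, η > 0, C > 0, k > 0, and X₀ = C·e^{-k/ε}. The transition time T solving X(T) = η for the explicit solution X(t) = X₀ exp[2(b-1)t + (2δ/ε)(e^{-εt} - 1)] satisfies the equation 2(b-1)T + (2δ/ε)e^{-εT} = k/ε + ln(η/C) + 2δ/ε, and this equation has the closed-form solution T = (1/ε)·W(-(δ/(b-1))·exp(-(ε ln(η/C) + k + 2δ)/(2(b-1)))) + (1/(2(b-1)))·(ln(η/C) + (k + 2δ)/ε), where W is the Lambert W function (a branch of the inverse of w ↦ w·eʷ). -/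
/-- Transition time near the saddle: with `X₀ = C e^{-k/ε}` and
`X(t) = X₀ exp[2(b-1)t + (2δ/ε)(e^{-εt} - 1)]`, the time `T` at which `X(T) = η`
is characterized by `2(b-1)T + (2δ/ε)e^{-εT} = k/ε + ln(η/C) + 2δ/ε`, and this
equation is solved in closed form by the Lambert function `W` (a branch of the
inverse of `w ↦ w eʷ`). -/
theorem transition_time_lambert (b ε δ η C k : ℝ) (hb : 1 < b) (hε : 0 < ε)
    (hδ : 0 < δ) (hη : 0 < η) (hC : 0 < C) (hk : 0 < k) (W : ℝ → ℝ)
    (hW : W (-(δ / (b - 1)) *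
            Real.exp (-(ε * Real.log (η / C) + k + 2 * δ) / (2 * (b - 1)))) *
          Real.exp (W (-(δ / (b - 1)) *
            Real.exp (-(ε * Real.log (η / C) + k + 2 * δ) / (2 * (b - 1))))) =
          -(δ / (b - 1)) *
            Real.exp (-(ε * Real.log (η / C) + k + 2 * δ) / (2 * (b - 1)))) :
    let X₀ : ℝ := C * Real.exp (-k / ε)
    let X : ℝ → ℝ := fun t =>
      X₀ * Real.exp (2 * (b - 1) * t + (2 * δ / ε) * (Real.exp (-ε * t) - 1))
    let T : ℝ := (1 / ε) * W (-(δ / (b - 1)) *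
        Real.exp (-(ε * Real.log (η / C) + k + 2 * δ) / (2 * (b - 1)))) +
      (1 / (2 * (b - 1))) * (Real.log (η / C) + (k + 2 * δ) / ε)
    (∀ t : ℝ, X t = η ↔
      2 * (b - 1) * t + (2 * δ / ε) * Real.exp (-ε * t) =
        k / ε + Real.log (η / C) + 2 * δ / ε) ∧
    2 * (b - 1) * T + (2 * δ / ε) * Real.exp (-ε * T) =
      k / ε + Real.log (η / C) + 2 * δ / ε := by
  intro X₀ X T
  have hb' : (0:ℝ) < b - 1 := by linarith
  simp only [X, X₀, T]
  set L := Real.log (η / C) with hL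
  set E := Real.exp (-(ε * L + k + 2 * δ) / (2 * (b - 1))) with hE
  set w := W (-(δ / (b - 1)) * E) with hw
  constructor
  · intro t
    rw [show C * Real.exp (-k / ε) *
        Real.exp (2 * (b - 1) * t + (2 * δ / ε) * (Real.exp (-ε * t) - 1)) =
        C * Real.exp (-k / ε + (2 * (b - 1) * t +
          (2 * δ / ε) * (Real.exp (-ε * t) - 1))) by
        rw [mul_assoc, ← Real.exp_add]]
    rw [show (η : ℝ) = C * Real.exp L by
      rw [hL, Real.exp_log (div_pos hη hC), mul_div_cancel₀ _ hC.ne']]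
    rw [mul_right_inj' hC.ne', Real.exp_eq_exp,
      show (2 * δ / ε) * (Real.exp (-ε * t) - 1)
          = (2 * δ / ε) * Real.exp (-ε * t) - 2 * δ / ε by ring]
    constructor <;> intro h <;> linear_combination h
  · have hwe : w * Real.exp w = -(δ / (b - 1)) * E := hW
    have hw2 : (b - 1) * w = -(δ * (E * Real.exp (-w))) := by
      have h := congrArg (fun x => x * ((b - 1) * Real.exp (-w))) hwe
      try simp only at h
      rw [show w * Real.exp w * ((b - 1) * Real.exp (-w))
            = (b - 1) * w * (Real.exp w * Real.exp (-w)) by ring,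
          ← Real.exp_add, add_neg_cancel, Real.exp_zero, mul_one] at h
      rw [h]; field_simp
    have hT : Real.exp (-ε * (1 / ε * w + 1 / (2 * (b - 1)) * (L + (k + 2 * δ) / ε)))
        = Real.exp (-w) * E := by
      rw [hE, ← Real.exp_add]; congr 1; field_simp; ring
    rw [hT]
    have hkey : (2 * δ / ε) * (Real.exp (-w) * E) = -(2 * (b - 1) * w / ε) := by
      have h2 : δ * (E * Real.exp (-w)) = -((b - 1) * w) := by linarith [hw2]
      field_simp
      nlinarith [h2]
    rw [hkey]
    field_simp
    ring
end

section
/- With the explicit solution Y(t) = δe^{-εt} and the transition time T given by the Lambert-function formula, the exit value Y_out = Y(T) satisfies, as ε → 0⁺, Y_out = δ·exp[-W(-(δ/(b-1))·e^{-(2δ+k)/(2(b-1))}) - (2δ+k)/(2(b-1))] + O(ε). In particular, the exit value has a strictly positive limit independent of ε. -/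
lemma exp_abs_sub_one_le (x R : ℝ) (hR : |x| ≤ R) :
    |Real.exp x - 1| ≤ |x| * Real.exp R := by
  have hR0 : 0 ≤ R := le_trans (abs_nonneg x) hR
  have he1 : (1:ℝ) ≤ Real.exp R := by
    rw [show (1:ℝ) = Real.exp 0 by simp]
    exact Real.exp_le_exp.mpr hR0
  rcases le_or_gt 0 x with hx | hx
  · have hx1 : (1:ℝ) ≤ Real.exp x := Real.one_le_exp hx
    rw [abs_of_nonneg (by linarith), abs_of_nonneg hx]
    have h1 : (-x) + 1 ≤ Real.exp (-x) := Real.add_one_le_exp _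
    have h2 : Real.exp (-x) * Real.exp x = 1 := by rw [← Real.exp_add]; simp
    have h3 : Real.exp x - 1 ≤ x * Real.exp x := by nlinarith [Real.exp_pos x]
    have h4 : Real.exp x ≤ Real.exp R := Real.exp_le_exp.mpr (le_trans (le_abs_self x) hR)
    nlinarith
  · have hx1 : Real.exp x < 1 := by
      rw [show (1:ℝ) = Real.exp 0 by simp]
      exact Real.exp_lt_exp.mpr hx
    rw [abs_of_nonpos (by linarith), abs_of_neg hx]
    have h1 : x + 1 ≤ Real.exp x := Real.add_one_le_exp _
    nlinarith

lemma lambert_lip (W : ℝ → ℝ) (hWcont : Continuous W) (hW0 : W 0 = 0)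
    (hWinv : ∀ z ∈ Set.Icc (-Real.exp (-1)) 0, W z * Real.exp (W z) = z)
    (a : ℝ) (ha : -Real.exp (-1) < a) (ha0 : a ≤ 0) :
    ∃ K > 0, ∀ z₁ ∈ Set.Icc a 0, ∀ z₂ ∈ Set.Icc a 0, |W z₁ - W z₂| ≤ K * |z₁ - z₂| := by
  have hsub : Set.Icc a 0 ⊆ Set.Icc (-Real.exp (-1)) 0 := Set.Icc_subset_Icc ha.le le_rfl
  have hWle0 : ∀ z ∈ Set.Icc a 0, W z ≤ 0 := by
    intro z hz
    have hid := hWinv z (hsub hz)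
    nlinarith [Real.exp_pos (W z), hz.2]
  have hWgt : ∀ z ∈ Set.Icc a 0, -1 < W z := by
    intro z hz
    by_contra h
    push_neg at h
    have hz0 : z ≤ 0 := hz.2
    have hIVT := intermediate_value_Icc hz0 hWcont.continuousOn
    have hmem : (-1:ℝ) ∈ Set.Icc (W z) (W 0) := ⟨h, by rw [hW0]; norm_num⟩
    obtain ⟨z', hz', hWz'⟩ := hIVT hmem
    have hz'mem : z' ∈ Set.Icc (-Real.exp (-1)) 0 :=
      ⟨le_trans ha.le (le_trans hz.1 hz'.1), hz'.2⟩
    have hid := hWinv z' hz'mem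
    rw [hWz'] at hid
    have hz'eq : z' = -Real.exp (-1) := by linarith [hid]
    have := lt_of_lt_of_le ha (le_trans hz.1 hz'.1)
    linarith
  have hne : (Set.Icc a 0).Nonempty := Set.nonempty_Icc.mpr ha0
  obtain ⟨zm, hzm, hmin⟩ := isCompact_Icc.exists_isMinOn hne hWcont.continuousOn
  set m := W zm with hm
  have hm1 : -1 < m := hWgt zm hzm
  have hm0 : m ≤ 0 := hWle0 zm hzm
  set c := (1 + m) * Real.exp m with hcdef
  have hcpos : 0 < c := mul_pos (by linarith) (Real.exp_pos m)
  have hp : ∀ w₁ ∈ Set.Icc m 0, ∀ w₂ ∈ Set.Icc m 0, w₂ ≤ w₁ →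
      c * (w₁ - w₂) ≤ w₁ * Real.exp w₁ - w₂ * Real.exp w₂ := by
    intro w₁ hw₁ w₂ hw₂ hle
    have hmono : MonotoneOn (fun w => w * Real.exp w - c * w) (Set.Icc m 0) := by
      apply monotoneOn_of_deriv_nonneg (convex_Icc m 0)
      · exact ((continuous_id.mul Real.continuous_exp).sub
          (continuous_const.mul continuous_id)).continuousOn
      · intro x _
        exact (((hasDerivAt_id x).mul (Real.hasDerivAt_exp x)).sub
          ((hasDerivAt_id x).const_mul c)).differentiableAt.differentiableWithinAt
      · intro x hx
        rw [interior_Icc] at hx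
        have hd : HasDerivAt (fun w => w * Real.exp w - c * w)
            (1 * Real.exp x + x * Real.exp x - c * 1) x :=
          ((hasDerivAt_id x).mul (Real.hasDerivAt_exp x)).sub ((hasDerivAt_id x).const_mul c)
        rw [hd.deriv]
        have hex : Real.exp x = Real.exp m * Real.exp (x - m) := by
          rw [← Real.exp_add]; ring_nf
        rw [hcdef, hex]
        have h1 : (0:ℝ) ≤ (1 + x) * (Real.exp (x - m) - (1 + (x - m))) :=
          mul_nonneg (by linarith [hx.1]) (by linarith [Real.add_one_le_exp (x - m)])
        have h2 : (0:ℝ) ≤ (x - m) * (2 + x) :=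
          mul_nonneg (by linarith [hx.1]) (by linarith [hx.1])
        nlinarith [Real.exp_pos m, mul_nonneg (Real.exp_pos m).le h1,
          mul_nonneg (Real.exp_pos m).le h2]
    have hmm := hmono hw₂ hw₁ hle
    simp only at hmm
    linarith
  refine ⟨1/c, by positivity, ?_⟩
  intro z₁ hz₁ z₂ hz₂
  have hw₁ : W z₁ ∈ Set.Icc m 0 := ⟨hmin hz₁, hWle0 z₁ hz₁⟩
  have hw₂ : W z₂ ∈ Set.Icc m 0 := ⟨hmin hz₂, hWle0 z₂ hz₂⟩
  have hid₁ := hWinv z₁ (hsub hz₁)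
  have hid₂ := hWinv z₂ (hsub hz₂)
  rcases le_total (W z₂) (W z₁) with hle | hle
  · have h := hp (W z₁) hw₁ (W z₂) hw₂ hle
    rw [hid₁, hid₂] at h
    have h2 : z₁ - z₂ ≤ |z₁ - z₂| := le_abs_self _
    rw [abs_of_nonneg (by linarith : (0:ℝ) ≤ W z₁ - W z₂), one_div, inv_mul_eq_div,
      le_div_iff₀ hcpos]
    nlinarith
  · have h := hp (W z₂) hw₂ (W z₁) hw₁ hle
    rw [hid₁, hid₂] at h
    have h2 : z₂ - z₁ ≤ |z₁ - z₂| := by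
      rw [abs_sub_comm]; exact le_abs_self _
    rw [abs_of_nonpos (by linarith : W z₁ - W z₂ ≤ 0), one_div, inv_mul_eq_div,
      le_div_iff₀ hcpos]
    nlinarith


/-- Exceptionally fast recovery: with `Y(t) = δe^{-εt}` and the Lambert-function
transition time `T(ε)`, the exit value `Y_out(ε) = Y(T(ε))` satisfies, as
`ε → 0⁺`, `Y_out = δ exp[-W(-(δ/(b-1))e^{-(2δ+k)/(2(b-1))}) - (2δ+k)/(2(b-1))]
+ O(ε)`; in particular the limit of the exit value is strictly positive and
independent of `ε`. -/
theorem exit_value_fast_recovery (b δ k η C : ℝ) (hb : 1 < b) (hδ : 0 < δ)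
    (hk : 0 < k) (hη : 0 < η) (hC : 0 < C) (W : ℝ → ℝ)
    (hWcont : Continuous W) (hW0 : W 0 = 0)
    (hWinv : ∀ z ∈ Set.Icc (-Real.exp (-1)) 0, W z * Real.exp (W z) = z) :
    let T : ℝ → ℝ := fun ε =>
      (1 / ε) * W (-(δ / (b - 1)) *
          Real.exp (-(ε * Real.log (η / C) + k + 2 * δ) / (2 * (b - 1)))) +
        (1 / (2 * (b - 1))) * (Real.log (η / C) + (k + 2 * δ) / ε)
    let Yout : ℝ → ℝ := fun ε => δ * Real.exp (-ε * T ε)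
    let Ylim : ℝ := δ * Real.exp
        (-W (-(δ / (b - 1)) * Real.exp (-(2 * δ + k) / (2 * (b - 1)))) -
          (2 * δ + k) / (2 * (b - 1)))
    0 < Ylim ∧
    (∃ M > 0, ∃ ε₀ > 0, ∀ ε : ℝ, 0 < ε → ε < ε₀ → |Yout ε - Ylim| ≤ M * ε) ∧
    Filter.Tendsto Yout (nhdsWithin 0 (Set.Ioi 0)) (nhds Ylim) := by
  intro T Yout Ylim
  have hB : (0:ℝ) < b - 1 := by linarith
  set g : ℝ → ℝ := fun ε => -(δ / (b - 1)) *
      Real.exp (-(ε * Real.log (η / C) + k + 2 * δ) / (2 * (b - 1))) with hgdef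
  have hgneg : ∀ ε : ℝ, g ε < 0 := fun ε =>
    mul_neg_of_neg_of_pos (by rw [neg_lt, neg_zero]; positivity) (Real.exp_pos _)
  have hx : 0 < δ / (b - 1) := by positivity
  -- value of g at 0
  have hg0' : g 0 = -(δ / (b - 1)) * Real.exp (-(k + 2 * δ) / (2 * (b - 1))) := by
    have h : -((0:ℝ) * Real.log (η / C) + k + 2 * δ) / (2 * (b - 1)) =
        -(k + 2 * δ) / (2 * (b - 1)) := by ring
    calc g 0 = -(δ / (b - 1)) *
        Real.exp (-(0 * Real.log (η / C) + k + 2 * δ) / (2 * (b - 1))) := rfl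
      _ = _ := by rw [h]
  -- g 0 is strictly above -exp(-1)
  have hg0lt : -Real.exp (-1) < g 0 := by
    have h1 : δ / (b - 1) * Real.exp (-(δ / (b - 1))) ≤ Real.exp (-1) := by
      have ha := Real.add_one_le_exp (δ / (b - 1) - 1)
      have hb1 : Real.exp (δ / (b - 1) - 1) * Real.exp (-(δ / (b - 1))) = Real.exp (-1) := by
        rw [← Real.exp_add]; ring_nf
      nlinarith [Real.exp_pos (-(δ / (b - 1)))]
    have h2 : Real.exp (-(k + 2 * δ) / (2 * (b - 1))) < Real.exp (-(δ / (b - 1))) := by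
      apply Real.exp_lt_exp.mpr
      rw [neg_div, neg_lt_neg_iff, div_lt_div_iff₀ hB (by linarith : (0:ℝ) < 2 * (b - 1))]
      nlinarith
    rw [hg0']
    nlinarith [mul_lt_mul_of_pos_left h2 hx]
  -- choice of the left endpoint a
  set a : ℝ := (g 0 - Real.exp (-1)) / 2 with hadef
  have ha1 : -Real.exp (-1) < a := by
    rw [hadef]; linarith
  have ha0 : a ≤ 0 := by
    rw [hadef]; linarith [hgneg 0, Real.exp_pos (-1:ℝ)]
  have hag0 : a < g 0 := by
    rw [hadef]; linarith
  obtain ⟨K, hKpos, hlip⟩ := lambert_lip W hWcont hW0 hWinv a ha1 ha0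
  -- Lipschitz estimate for g near 0
  set R : ℝ := |Real.log (η / C)| / (2 * (b - 1)) with hRdef
  have hR0 : 0 ≤ R := by positivity
  set Kg : ℝ := δ / (b - 1) * Real.exp (-(k + 2 * δ) / (2 * (b - 1))) * Real.exp R * R
    with hKgdef
  have hKg0 : 0 ≤ Kg := by positivity
  have hgLip : ∀ ε : ℝ, 0 ≤ ε → ε ≤ 1 → |g ε - g 0| ≤ Kg * ε := by
    intro ε hε0 hε1
    have hsplit : Real.exp (-(ε * Real.log (η / C) + k + 2 * δ) / (2 * (b - 1))) =
        Real.exp (-(k + 2 * δ) / (2 * (b - 1))) *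
          Real.exp (-(ε * Real.log (η / C)) / (2 * (b - 1))) := by
      rw [← Real.exp_add]; congr 1; ring
    have hgε : g ε = -(δ / (b - 1)) * Real.exp (-(k + 2 * δ) / (2 * (b - 1))) *
        Real.exp (-(ε * Real.log (η / C)) / (2 * (b - 1))) := by
      calc g ε = -(δ / (b - 1)) *
          Real.exp (-(ε * Real.log (η / C) + k + 2 * δ) / (2 * (b - 1))) := rfl
        _ = _ := by rw [hsplit]; ring
    have e1 : g ε - g 0 = -(δ / (b - 1)) * Real.exp (-(k + 2 * δ) / (2 * (b - 1))) *
        (Real.exp (-(ε * Real.log (η / C)) / (2 * (b - 1))) - 1) := by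
      rw [hgε, hg0']; ring
    set d : ℝ := -(ε * Real.log (η / C)) / (2 * (b - 1)) with hddef
    have hdabs : |d| = ε * R := by
      rw [hddef, hRdef, abs_div, abs_neg, abs_mul,
        abs_of_nonneg hε0, abs_of_pos (by linarith : (0:ℝ) < 2 * (b - 1))]
      ring
    have hdR : |d| ≤ R := by
      rw [hdabs]; nlinarith
    have hexp := exp_abs_sub_one_le d R hdR
    rw [hdabs] at hexp
    rw [e1, abs_mul, abs_mul, abs_neg, abs_of_pos hx, abs_of_pos (Real.exp_pos _)]
    have hc0 : 0 ≤ δ / (b - 1) * Real.exp (-(k + 2 * δ) / (2 * (b - 1))) := by positivity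
    calc δ / (b - 1) * Real.exp (-(k + 2 * δ) / (2 * (b - 1))) * |Real.exp d - 1|
        ≤ δ / (b - 1) * Real.exp (-(k + 2 * δ) / (2 * (b - 1))) * (ε * R * Real.exp R) := by
          apply mul_le_mul_of_nonneg_left _ hc0
          linarith
      _ = Kg * ε := by rw [hKgdef]; ring
  -- the key algebraic identity
  have hkey : ∀ ε : ℝ, g ε ∈ Set.Icc (-Real.exp (-1)) 0 →
      δ * Real.exp (-W (g ε) - (ε * Real.log (η / C) + k + 2 * δ) / (2 * (b - 1))) =
        -(b - 1) * W (g ε) := by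
    intro ε hmem
    have hid := hWinv _ hmem
    have hEne : Real.exp (W (g ε)) ≠ 0 := (Real.exp_pos _).ne'
    have h2 : W (g ε) = g ε * Real.exp (-W (g ε)) := by
      rw [Real.exp_neg]
      field_simp
      linarith [hid]
    calc δ * Real.exp (-W (g ε) - (ε * Real.log (η / C) + k + 2 * δ) / (2 * (b - 1)))
        = δ * (Real.exp (-(ε * Real.log (η / C) + k + 2 * δ) / (2 * (b - 1))) *
            Real.exp (-W (g ε))) := by
          rw [← Real.exp_add]; congr 1; ring
      _ = -(b - 1) * (g ε * Real.exp (-W (g ε))) := by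
          have hge : g ε = -(δ / (b - 1)) *
              Real.exp (-(ε * Real.log (η / C) + k + 2 * δ) / (2 * (b - 1))) := rfl
          rw [hge]
          field_simp
      _ = -(b - 1) * W (g ε) := by rw [← h2]
  have hg0memE : g 0 ∈ Set.Icc (-Real.exp (-1)) 0 := ⟨hg0lt.le, (hgneg 0).le⟩
  have hg0memA : g 0 ∈ Set.Icc a 0 := ⟨hag0.le, (hgneg 0).le⟩
  -- Ylim in Lambert form
  have hYlimEq : Ylim = -(b - 1) * W (g 0) := by
    have h0 : g 0 = -(δ / (b - 1)) * Real.exp (-(2 * δ + k) / (2 * (b - 1))) := by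
      rw [hg0']
      congr 2
      ring
    have h1 : Ylim = δ * Real.exp (-W (g 0) - (2 * δ + k) / (2 * (b - 1))) := by
      rw [h0]
    have h2 := hkey 0 hg0memE
    rw [show -W (g 0) - (0 * Real.log (η / C) + k + 2 * δ) / (2 * (b - 1)) =
        -W (g 0) - (2 * δ + k) / (2 * (b - 1)) from by ring] at h2
    exact h1.trans h2
  -- Yout in Lambert form
  have hYoutEq : ∀ ε : ℝ, 0 < ε → g ε ∈ Set.Icc (-Real.exp (-1)) 0 →
      Yout ε = -(b - 1) * W (g ε) := by
    intro ε hε hmem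
    have h1 : Yout ε = δ * Real.exp (-ε * T ε) := rfl
    have hT : T ε = (1 / ε) * W (g ε) +
        (1 / (2 * (b - 1))) * (Real.log (η / C) + (k + 2 * δ) / ε) := rfl
    have h2 : -ε * T ε = -W (g ε) -
        (ε * Real.log (η / C) + k + 2 * δ) / (2 * (b - 1)) := by
      rw [hT]
      field_simp
      ring
    rw [h1, h2]
    exact hkey ε hmem
  -- the constants
  set M : ℝ := (b - 1) * K * (Kg + 1) with hMdef
  have hMpos : 0 < M := by positivity
  set ε₀ : ℝ := min 1 ((g 0 - a) / (Kg + 1)) with hε₀def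
  have hε₀pos : 0 < ε₀ := lt_min one_pos (div_pos (by linarith) (by positivity))
  -- the quantitative bound
  have hmain : ∀ ε : ℝ, 0 < ε → ε < ε₀ → |Yout ε - Ylim| ≤ M * ε := by
    intro ε hε hεlt
    have hε1 : ε ≤ 1 := le_trans hεlt.le (min_le_left _ _)
    have hgb := hgLip ε hε.le hε1
    have h5 : Kg * ε < g 0 - a := by
      have h6 : ε < (g 0 - a) / (Kg + 1) := lt_of_lt_of_le hεlt (min_le_right _ _)
      have h7 : ε * (Kg + 1) < g 0 - a := (lt_div_iff₀ (by positivity)).mp h6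
      nlinarith
    have hga : a ≤ g ε := by
      have h8 := (abs_le.mp hgb).1
      linarith
    have hmemA : g ε ∈ Set.Icc a 0 := ⟨hga, (hgneg ε).le⟩
    have hmemE : g ε ∈ Set.Icc (-Real.exp (-1)) 0 := ⟨le_trans ha1.le hga, (hgneg ε).le⟩
    rw [hYoutEq ε hε hmemE, hYlimEq]
    have h8 : |(-(b - 1) * W (g ε)) - (-(b - 1) * W (g 0))| =
        (b - 1) * |W (g ε) - W (g 0)| := by
      rw [show (-(b - 1) * W (g ε)) - (-(b - 1) * W (g 0)) =
          -((b - 1) * (W (g ε) - W (g 0))) from by ring, abs_neg, abs_mul, abs_of_pos hB]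
    rw [h8]
    have h9 := hlip (g ε) hmemA (g 0) hg0memA
    calc (b - 1) * |W (g ε) - W (g 0)| ≤ (b - 1) * (K * |g ε - g 0|) :=
          mul_le_mul_of_nonneg_left h9 hB.le
      _ ≤ (b - 1) * (K * (Kg * ε)) := by
          apply mul_le_mul_of_nonneg_left _ hB.le
          exact mul_le_mul_of_nonneg_left hgb hKpos.le
      _ = ((b - 1) * K * Kg) * ε := by ring
      _ ≤ ((b - 1) * K * (Kg + 1)) * ε := by
          apply mul_le_mul_of_nonneg_right _ hε.le
          exact mul_le_mul_of_nonneg_left (by linarith) (mul_nonneg hB.le hKpos.le)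
      _ = M * ε := by rw [hMdef]
  refine ⟨?_, ⟨M, hMpos, ε₀, hε₀pos, hmain⟩, ?_⟩
  · exact mul_pos hδ (Real.exp_pos _)
  -- the limit statement
  have hεev : ∀ᶠ ε in nhdsWithin (0:ℝ) (Set.Ioi 0), |Yout ε - Ylim| ≤ M * ε := by
    filter_upwards [Ioo_mem_nhdsGT
      (show (0:ℝ) < ε₀ from hε₀pos)] with ε hε
    exact hmain ε hε.1 hε.2
  have htend0 : Filter.Tendsto (fun ε : ℝ => Yout ε - Ylim)
      (nhdsWithin 0 (Set.Ioi 0)) (nhds 0) := by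
    apply squeeze_zero_norm' (a := fun ε : ℝ => M * ε)
    · simpa [Real.norm_eq_abs] using hεev
    · have h : Filter.Tendsto (fun ε : ℝ => M * ε) (nhds 0) (nhds (M * 0)) :=
        (continuous_const.mul continuous_id).tendsto 0
      rw [mul_zero] at h
      exact h.mono_left nhdsWithin_le_nhds
  have := htend0.add_const Ylim
  simpa using this
end
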